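/- For Ψ = (ψ, φ) ∈ ℍ² ⊕ ℍ² = ℍ⁴, define Ψ·Ψ ∈ 𝒱 as the block matrix with (1,1) entry 2⟨ψ,φ⟩ (where ⟨ψ,φ⟩ = Re(ψ†φ)), (1,2) entry -(ψ·ψ)~ + (φ·φ)~, (2,1) entry -ψ·ψ + φ·φ, and (2,2) entry -2⟨ψ,φ⟩. Then the 4-Ψ's rule holds: Ψ·((Ψ·Ψ)Ψ) = 0, where Ψ·Φ is the symmetric bilinear extension of Ψ·Ψ. -/

import Mathlib

open Matrix

/-- The outer product `ψφ†`. -/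
noncomputable def qouter (ψ φ : Fin 2 → Quaternion ℝ) : Matrix (Fin 2) (Fin 2) (Quaternion ℝ) :=
  Matrix.of fun i j => ψ i * star (φ j)

/-- Trace reversal `M̃ = M - (tr M)·1`. -/
noncomputable def qtilde (M : Matrix (Fin 2) (Fin 2) (Quaternion ℝ)) :
    Matrix (Fin 2) (Fin 2) (Quaternion ℝ) :=
  M - (Matrix.trace M) • (1 : Matrix (Fin 2) (Fin 2) (Quaternion ℝ))

/-- The real pairing `⟨ψ,φ⟩ = Re(ψ†φ)` on `ℍ²`. -/
noncomputable def qpair (ψ φ : Fin 2 → Quaternion ℝ) : ℝ :=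
  (∑ i, star (ψ i) * φ i).re

/-- For `Ψ = (ψ, φ) ∈ ℍ² ⊕ ℍ²`, the vector `Ψ·Ψ ∈ 𝒱 ⊂ ℍ[4]`: the block matrix with
(1,1) entry `2⟨ψ,φ⟩`, (1,2) entry `-(ψ·ψ)~ + (φ·φ)~`, (2,1) entry `-ψ·ψ + φ·φ`, and
(2,2) entry `-2⟨ψ,φ⟩`, where `ψ·ψ = 2(ψψ†)~` on `S₊` and `φ·φ = 2φφ†` on `S₋`. -/
noncomputable def dotSq (ψ φ : Fin 2 → Quaternion ℝ) :
    Matrix (Fin 2 ⊕ Fin 2) (Fin 2 ⊕ Fin 2) (Quaternion ℝ) :=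
  Matrix.fromBlocks
    ((2 * qpair ψ φ) • 1)
    (-((2 : ℝ) • qouter ψ ψ) + qtilde ((2 : ℝ) • qouter φ φ))
    (-((2 : ℝ) • qtilde (qouter ψ ψ)) + (2 : ℝ) • qouter φ φ)
    (-((2 * qpair ψ φ) • 1))

/-- The symmetric bilinear extension `Ψ·Φ` of `Ψ ↦ Ψ·Ψ`, obtained by polarization. -/
noncomputable def dotBil (ψ φ χ θ : Fin 2 → Quaternion ℝ) :
    Matrix (Fin 2 ⊕ Fin 2) (Fin 2 ⊕ Fin 2) (Quaternion ℝ) :=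
  ((1 : ℝ) / 2) • (dotSq (ψ + χ) (φ + θ) - dotSq ψ φ - dotSq χ θ)

set_option maxHeartbeats 0

/-- Bilinearity of `dotBil`, expressed in explicit block form. -/
theorem dotBil_eq (ψ φ χ θ : Fin 2 → Quaternion ℝ) :
    dotBil ψ φ χ θ =
      Matrix.fromBlocks
        ((qpair ψ θ + qpair χ φ) • 1)
        (-(qouter ψ χ + qouter χ ψ) + qtilde (qouter φ θ + qouter θ φ))
        (-(qtilde (qouter ψ χ + qouter χ ψ)) + (qouter φ θ + qouter θ φ))
        (-((qpair ψ θ + qpair χ φ) • 1)) := by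
  refine Matrix.ext fun i j => ?_
  rcases i with i | i <;> rcases j with j | j <;> fin_cases i <;> fin_cases j <;>
  · simp only [dotBil, dotSq, qouter, qtilde, qpair, Matrix.fromBlocks, Matrix.smul_apply,
      Matrix.sub_apply, Matrix.add_apply, Matrix.neg_apply, Matrix.of_apply, Sum.elim_inl,
      Sum.elim_inr, Matrix.one_apply, Matrix.trace, Matrix.diag, Pi.add_apply,
      Fin.sum_univ_two]
    ext <;>
    · simp only [Quaternion.re_mul, Quaternion.imI_mul, Quaternion.imJ_mul, Quaternion.imK_mul,
        Quaternion.re_add, Quaternion.re_neg, Quaternion.re_sub, Quaternion.re_star,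
        Quaternion.imI_star, Quaternion.imJ_star, Quaternion.imK_star, Quaternion.imI_add,
        Quaternion.imJ_add, Quaternion.imK_add, Quaternion.imI_neg, Quaternion.imJ_neg,
        Quaternion.imK_neg, Quaternion.imI_sub, Quaternion.imJ_sub, Quaternion.imK_sub,
        Quaternion.re_zero, Quaternion.re_smul, Quaternion.imI_smul, Quaternion.imJ_smul,
        Quaternion.imK_smul, Quaternion.imI_coe, Quaternion.imJ_coe, Quaternion.imK_coe,
        Quaternion.re_one, Quaternion.imI_one, Quaternion.imJ_one, Quaternion.imK_one,
        smul_eq_mul, Quaternion.imI_zero, Quaternion.imJ_zero, Quaternion.imK_zero, if_true,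
        if_false, Sum.inl.injEq, Sum.inr.injEq, reduceCtorEq, Fin.isValue, Fin.reduceEq,
        mul_one, mul_zero, Fin.zero_eta, Fin.mk_one, ite_true, ite_false]
      try ring

/-- The 4-Ψ's rule over ℍ (dimension 7): `Ψ·((Ψ·Ψ)Ψ) = 0` for every spinor
`Ψ = (ψ, φ) ∈ ℍ⁴`. -/
theorem four_psis_rule (ψ φ : Fin 2 → Quaternion ℝ) :
    dotBil ψ φ
      (fun i => (dotSq ψ φ *ᵥ Sum.elim ψ φ) (Sum.inl i))
      (fun i => (dotSq ψ φ *ᵥ Sum.elim ψ φ) (Sum.inr i)) = 0 := by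
  rw [dotBil_eq]
  refine Matrix.ext fun i j => ?_
  rcases i with i | i <;> rcases j with j | j <;> fin_cases i <;> fin_cases j <;>
  · simp only [dotSq, qouter, qtilde, qpair, Matrix.fromBlocks, Matrix.mulVec,
      dotProduct, Fin.sum_univ_two, Fintype.sum_sum_type, Matrix.smul_apply,
      Matrix.sub_apply, Matrix.add_apply, Matrix.neg_apply, Matrix.of_apply, Sum.elim_inl,
      Sum.elim_inr, Matrix.one_apply, Matrix.trace, Matrix.diag, Pi.add_apply,
      Matrix.zero_apply]
    ext <;>
    · simp only [Quaternion.re_mul, Quaternion.imI_mul, Quaternion.imJ_mul, Quaternion.imK_mul,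
        Quaternion.re_add, Quaternion.re_neg, Quaternion.re_sub, Quaternion.re_star,
        Quaternion.imI_star, Quaternion.imJ_star, Quaternion.imK_star, Quaternion.imI_add,
        Quaternion.imJ_add, Quaternion.imK_add, Quaternion.imI_neg, Quaternion.imJ_neg,
        Quaternion.imK_neg, Quaternion.imI_sub, Quaternion.imJ_sub, Quaternion.imK_sub,
        Quaternion.re_zero, Quaternion.re_smul, Quaternion.imI_smul, Quaternion.imJ_smul,
        Quaternion.imK_smul, Quaternion.imI_coe, Quaternion.imJ_coe, Quaternion.imK_coe,
        Quaternion.re_one, Quaternion.imI_one, Quaternion.imJ_one, Quaternion.imK_one,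
        smul_eq_mul, Quaternion.imI_zero, Quaternion.imJ_zero, Quaternion.imK_zero, if_true,
        if_false, Sum.inl.injEq, Sum.inr.injEq, reduceCtorEq, Fin.isValue, Fin.reduceEq,
        mul_one, mul_zero, Fin.zero_eta, Fin.mk_one, ite_true, ite_false]
      try ring
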